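/- (Rigidity of admissible tableaux on μ+(c^{r+1})) Let μ be a partition with μ₁′ ≥ r+1 and μ_{r+1} ≥ s+1, let c ∈ ℤ_{≥1}, and set μ+(c^{r+1}) = (μ₁+c, …, μ_{r+1}+c, μ_{r+2}, …, μ_{μ₁′}). Then every admissible tableau b on the Young diagram of μ+(c^{r+1}) satisfies: b(i,j) = i for all 1 ≤ i ≤ r+1 and 1 ≤ j ≤ c, and b(i,j) ∈ J₋ for all r+2 ≤ i ≤ μ₁′ and 1 ≤ j ≤ μ_i. -/

import Mathlib

open Complex Filter Topology

namespace AnalyticBethe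

/-- The data of the analytic Bethe ansatz for `sl(r+1|s+1)`:
a generic deformation parameter `q` (with a fixed logarithm `Lq`),
Bethe roots `root a j` of each color `a ∈ {1,…,r+s+1}` (0-indexed here),
and inhomogeneities `w j` together with the parameters `bw j` (the `(r+1)`-th
Kac–Dynkin labels of the quantum space) at each of `L` sites. -/
structure Setup (r s : ℕ) where
  q : ℂ
  Lq : ℂ
  hexp : Complex.exp Lq = q
  hq0 : q ≠ 0
  hgen : ∀ n : ℕ, 0 < n → q ^ n ≠ 1
  Nb : Fin (r + s + 1) → ℕ
  root : (a : Fin (r + s + 1)) → Fin (Nb a) → ℂ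
  L : ℕ
  w : Fin L → ℂ
  bw : Fin L → ℂ

variable {r s : ℕ}

/-- The `q`-number `[u] = (q^u - q^{-u})/(q - q⁻¹)`. -/
noncomputable def Setup.br (S : Setup r s) (u : ℂ) : ℂ :=
  (Complex.exp (u * S.Lq) - Complex.exp (-(u * S.Lq))) / (S.q - S.q⁻¹)

/-- `Q_a(u) = ∏_j [u - u_j^{(a)}]` for `1 ≤ a ≤ r+s+1`, and `Q_0 = Q_{r+s+2} = 1`. -/
noncomputable def Setup.Q (S : Setup r s) (a : ℕ) (u : ℂ) : ℂ :=
  if h : 1 ≤ a ∧ a ≤ r + s + 1 then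
    have ha : a - 1 < r + s + 1 := by omega
    ∏ j : Fin (S.Nb ⟨a - 1, ha⟩), S.br (u - S.root ⟨a - 1, ha⟩ j)
  else 1

/-- The vacuum parts `ψ_a(u)`. -/
noncomputable def Setup.psi (S : Setup r s) (a : ℕ) (u : ℂ) : ℂ :=
  if a ≤ r + 1 then 1
  else ∏ j : Fin S.L,
    S.br (u - S.w j + (r : ℂ) + 1 - S.bw j) / S.br (u - S.w j + (r : ℂ) + 1 + S.bw j)

/-- The functions `z(a;u)`, `a ∈ J = {1,…,r+s+2}`. -/
noncomputable def Setup.z (S : Setup r s) (a : ℕ) (u : ℂ) : ℂ :=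
  if a ≤ r + 1 then
    S.psi a u * S.Q (a - 1) (u + (a : ℂ) + 1) * S.Q a (u + (a : ℂ) - 2) /
      (S.Q (a - 1) (u + (a : ℂ) - 1) * S.Q a (u + (a : ℂ)))
  else
    S.psi a u * S.Q (a - 1) (u + 2 * (r : ℂ) - (a : ℂ) + 1) *
        S.Q a (u + 2 * (r : ℂ) - (a : ℂ) + 4) /
      (S.Q (a - 1) (u + 2 * (r : ℂ) - (a : ℂ) + 3) *
        S.Q a (u + 2 * (r : ℂ) - (a : ℂ) + 2))

/-- The denominator of `z(a;u)` coming from the `Q`-functions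
(the vacuum parts `ψ` are disregarded). -/
noncomputable def Setup.zDen (S : Setup r s) (a : ℕ) (u : ℂ) : ℂ :=
  if a ≤ r + 1 then S.Q (a - 1) (u + (a : ℂ) - 1) * S.Q a (u + (a : ℂ))
  else S.Q (a - 1) (u + 2 * (r : ℂ) - (a : ℂ) + 3) *
       S.Q a (u + 2 * (r : ℂ) - (a : ℂ) + 2)

/-- The bilinear pairing `(α_a|α_b)` of the distinguished simple roots of `sl(r+1|s+1)`. -/
def cartan (r : ℕ) (a b : ℕ) : ℤ :=
  if a = b then (if a ≤ r then 2 else if a = r + 1 then 0 else -2)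
  else if b = a + 1 ∨ a = b + 1 then (if min a b ≤ r then -1 else 1)
  else 0

/-- The Bethe ansatz equations (BAE).  Here the color `a ∈ {1,…,r+s+1}` is represented
by `a.1 + 1` for `a : Fin (r+s+1)`; `t_a = 1` for `a ≤ r+1` and `t_a = -1` otherwise,
and the Kac–Dynkin labels of the quantum space are `b_j^{(a)} = δ_{a,r+1}·bw j`. -/
def Setup.BAE (S : Setup r s) : Prop :=
  ∀ (a : Fin (r + s + 1)) (k : Fin (S.Nb a)),
    -(∏ j : Fin S.L,
        S.br (S.root a k - S.w j +
          (if a.1 + 1 = r + 1 then (1 : ℂ) else 0) * S.bw j /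
            (if a.1 + 1 ≤ r + 1 then (1 : ℂ) else -1)) /
        S.br (S.root a k - S.w j -
          (if a.1 + 1 = r + 1 then (1 : ℂ) else 0) * S.bw j /
            (if a.1 + 1 ≤ r + 1 then (1 : ℂ) else -1)))
    = (-1 : ℂ) ^ (if a.1 + 1 = r + 1 then 1 else 0) *
      ∏ b : Fin (r + s + 1),
        S.Q (b.1 + 1) (S.root a k + (cartan r (a.1 + 1) (b.1 + 1) : ℂ)) /
          S.Q (b.1 + 1) (S.root a k - (cartan r (a.1 + 1) (b.1 + 1) : ℂ))

/-- Genericity of the Bethe roots: each `Q_a` has a simple zero at each Bethe root of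
color `a`, and no `Q_b` vanishes at any other integral shift of a Bethe root; hence all
potential poles arising from zeros of `Q`-functions in denominators are simple. -/
def Setup.Generic (S : Setup r s) : Prop :=
  (∀ (a : Fin (r + s + 1)) (k : Fin (S.Nb a)),
      deriv (S.Q (a.1 + 1)) (S.root a k) ≠ 0) ∧
  (∀ (a : Fin (r + s + 1)) (k : Fin (S.Nb a)) (b : ℕ) (m : ℤ),
      1 ≤ b → b ≤ r + s + 1 → (b ≠ a.1 + 1 ∨ m ≠ 0) →
      S.Q b (S.root a k + (m : ℂ)) ≠ 0)

/-- A Young diagram, presented as an antitone, eventually-zero sequence of row lengths.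
`part i` is the length `μ_{i+1}` of the `(i+1)`-th row (0-indexed). -/
structure YD where
  part : ℕ → ℕ
  len : ℕ
  anti : ∀ ⦃i j : ℕ⦄, i ≤ j → part j ≤ part i
  zero : ∀ i, len ≤ i → part i = 0

/-- `conj μ j = μ′_{j+1}`, the length of the `(j+1)`-th column (0-indexed). -/
def YD.conj (μ : YD) (j : ℕ) : ℕ :=
  ((Finset.range μ.len).filter (fun i => j < μ.part i)).card

/-- The empty Young diagram. -/
def emptyYD : YD where
  part := fun _ => 0
  len := 0
  anti := fun _ _ _ => le_refl 0
  zero := fun _ _ => rfl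

/-- The rectangular Young diagram `(m^a)` with `a` rows of length `m`. -/
def rect (m a : ℕ) : YD where
  part := fun i => if i < a then m else 0
  len := a
  anti := by intro i j hij; split_ifs <;> omega
  zero := by intro i hi; rw [if_neg (by omega)]

/-- `μ + (c^k)`: add `c` columns to the first `k` rows. -/
def muPlus (mu : YD) (c k : ℕ) : YD where
  part := fun i => if i < k then mu.part i + c else mu.part i
  len := max mu.len k
  anti := by
    intro i j hij
    have h := mu.anti hij
    split_ifs <;> omega
  zero := by
    intro i hi
    have h1 : mu.len ≤ i := le_trans (le_max_left _ _) hi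
    have h2 : k ≤ i := le_trans (le_max_right _ _) hi
    rw [if_neg (by omega), mu.zero i h1]

/-- The first `k` rows `(μ₁,…,μ_k)` of `μ`. -/
def truncate (mu : YD) (k : ℕ) : YD where
  part := fun i => if i < k then mu.part i else 0
  len := min mu.len k
  anti := by
    intro i j hij
    have h := mu.anti hij
    split_ifs <;> omega
  zero := by
    intro i hi
    split_ifs with h
    · exact mu.zero i (by omega)
    · rfl

/-- The rows of `μ` below the `k`-th one: `(μ_{k+1}, μ_{k+2}, …)`. -/
def shiftRows (mu : YD) (k : ℕ) : YD where
  part := fun i => mu.part (i + k)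
  len := mu.len - k
  anti := fun i j hij => mu.anti (by omega)
  zero := fun i hi => mu.zero (i + k) (by omega)

/-- The cells of a skew Young diagram `λ ⊂ μ`, in (1-indexed) matrix coordinates:
`(i,j)` with `1 ≤ i`, `λ_i < j ≤ μ_i`. -/
def cells (lam mu : YD) : Finset (ℕ × ℕ) :=
  (Finset.Icc 1 mu.len ×ˢ Finset.Icc 1 (mu.part 0)).filter
    (fun p => lam.part (p.1 - 1) < p.2 ∧ p.2 ≤ mu.part (p.1 - 1))

abbrev Cell (lam mu : YD) := {x : ℕ × ℕ // x ∈ cells lam mu}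

/-- A tableau on the skew diagram `λ ⊂ μ`: an assignment of an element of
`J = {1,…,r+s+2}` (encoded by `Fin (r+s+2)`) to every cell. -/
abbrev Tab (r s : ℕ) (lam mu : YD) := Cell lam mu → Fin (r + s + 2)

/-- The entry of a tableau at a cell, as an element of `J = {1,…,r+s+2}`. -/
def entry {lam mu : YD} (t : Tab r s lam mu) (p : Cell lam mu) : ℕ := (t p).1 + 1

/-- Admissibility of a tableau: entries weakly increase along rows and down columns,
two equal adjacent entries in a row must lie in `J₊ = {1,…,r+1}`, and two equal adjacent
entries in a column must lie in `J₋ = {r+2,…,r+s+2}`. -/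
def Adm (r s : ℕ) (lam mu : YD) (t : Tab r s lam mu) : Prop :=
  ∀ p q : Cell lam mu,
    (q.1.1 = p.1.1 ∧ q.1.2 = p.1.2 + 1 →
      entry t p ≤ entry t q ∧ (entry t p = entry t q → entry t p ≤ r + 1)) ∧
    (q.1.1 = p.1.1 + 1 ∧ q.1.2 = p.1.2 →
      entry t p ≤ entry t q ∧ (entry t p = entry t q → r + 2 ≤ entry t p))

open Classical in
/-- The dressed vacuum form `T_{λ⊂μ}(u)`:
`∑_{admissible b} ∏_{(i,j)} (−1)^{p(b(i,j))} z(b(i,j); u − μ₁ + μ₁′ − 2i + 2j)`. -/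
noncomputable def Tfun (S : Setup r s) (lam mu : YD) (u : ℂ) : ℂ :=
  ∑ t : Tab r s lam mu,
    if Adm r s lam mu t then
      ∏ p : Cell lam mu,
        (-1 : ℂ) ^ (if entry t p ≤ r + 1 then 0 else 1) *
          S.z (entry t p)
            (u - (mu.part 0 : ℂ) + (mu.conj 0 : ℂ) - 2 * (p.1.1 : ℂ) + 2 * (p.1.2 : ℂ))
    else 0

/-- Admissibility with all entries restricted to `J₋ = {r+2,…,r+s+2}`. -/
def AdmH (r s : ℕ) (nu : YD) (t : Tab r s emptyYD nu) : Prop :=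
  Adm r s emptyYD nu t ∧ ∀ p : Cell emptyYD nu, r + 2 ≤ entry t p

open Classical in
/-- `H_ν(u)`: the same tableau sum as `T_ν(u)`, restricted to tableaux with all
entries in `J₋`. -/
noncomputable def Hfun (S : Setup r s) (nu : YD) (u : ℂ) : ℂ :=
  ∑ t : Tab r s emptyYD nu,
    if AdmH r s nu t then
      ∏ p : Cell emptyYD nu,
        (-1 : ℂ) ^ (if entry t p ≤ r + 1 then 0 else 1) *
          S.z (entry t p)
            (u - (nu.part 0 : ℂ) + (nu.conj 0 : ℂ) - 2 * (p.1.1 : ℂ) + 2 * (p.1.2 : ℂ))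
    else 0

/-- The potential poles of `T_{λ⊂μ}`: the points where the `Q`-denominator of some
`z`-factor of some admissible summand vanishes (vacuum parts disregarded). -/
def PotPole (S : Setup r s) (lam mu : YD) : Set ℂ :=
  {p | ∃ t : Tab r s lam mu, Adm r s lam mu t ∧
    ∃ q : Cell lam mu,
      S.zDen (entry t q)
        (p - (mu.part 0 : ℂ) + (mu.conj 0 : ℂ) - 2 * (q.1.1 : ℂ) + 2 * (q.1.2 : ℂ)) = 0}

/-- The potential poles of `H_ν` (vacuum parts disregarded). -/
def PotPoleH (S : Setup r s) (nu : YD) : Set ℂ :=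
  {p | ∃ t : Tab r s emptyYD nu, AdmH r s nu t ∧
    ∃ q : Cell emptyYD nu,
      S.zDen (entry t q)
        (p - (nu.part 0 : ℂ) + (nu.conj 0 : ℂ) - 2 * (q.1.1 : ℂ) + 2 * (q.1.2 : ℂ)) = 0}

/-- The deformed dressed vacuum form `T̃_{μ;c}(u)` for `c ∈ ℂ`. -/
noncomputable def Ttilde (S : Setup r s) (mu : YD) (c : ℂ) (u : ℂ) : ℂ :=
  S.Q (r + 1) (u - c + (mu.conj 0 : ℂ) - (mu.part 0 : ℂ) - (r : ℂ) - 1) /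
    S.Q (r + 1) (u + c + (mu.conj 0 : ℂ) - (mu.part 0 : ℂ) - (r : ℂ) - 1) *
    Tfun S emptyYD (truncate mu (r + 1)) (u + (mu.conj 0 : ℂ) + c - (r : ℂ) - 1) *
    Hfun S (shiftRows mu (r + 1))
      (u - (mu.part 0 : ℂ) + (mu.part (r + 1) : ℂ) - c - (r : ℂ) - 1)

/-- The potential poles of `T̃_{μ;c}` (vacuum parts disregarded). -/
def PotPoleTilde (S : Setup r s) (mu : YD) (c : ℂ) : Set ℂ :=
  {p | S.Q (r + 1) (p + c + (mu.conj 0 : ℂ) - (mu.part 0 : ℂ) - (r : ℂ) - 1) = 0 ∨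
    (p + (mu.conj 0 : ℂ) + c - (r : ℂ) - 1) ∈ PotPole S emptyYD (truncate mu (r + 1)) ∨
    (p - (mu.part 0 : ℂ) + (mu.part (r + 1) : ℂ) - c - (r : ℂ) - 1) ∈
      PotPoleH S (shiftRows mu (r + 1))}

/-- `T̃^{r+1}_{c+s+1}(u)` for `c ∈ ℂ`. -/
noncomputable def TtildeRect (S : Setup r s) (c : ℂ) (u : ℂ) : ℂ :=
  S.Q (r + 1) (u - c - (s : ℂ) - 1) / S.Q (r + 1) (u + c - (s : ℂ) - 1) *
    Tfun S emptyYD (rect (s + 1) (r + 1)) (u + c)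

/-- The potential poles of `T̃^{r+1}_{c+s+1}` (vacuum parts disregarded). -/
def PotPoleTildeRect (S : Setup r s) (c : ℂ) : Set ℂ :=
  {p | S.Q (r + 1) (p + c - (s : ℂ) - 1) = 0 ∨
       (p + c) ∈ PotPole S emptyYD (rect (s + 1) (r + 1))}

/-- `T^a(u) = T_{(1^a)}(u)` extended by the conventions `T^0 = 1`, `T^a = 0` for `a < 0`. -/
noncomputable def Tcol (S : Setup r s) (a : ℤ) (u : ℂ) : ℂ :=
  if a < 0 then 0 else if a = 0 then 1 else Tfun S emptyYD (rect 1 a.toNat) u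

/-- `T_m^1(u) = T_{(m)}(u)` extended by the conventions `T_0^1 = 1`, `T_m^1 = 0` for `m < 0`. -/
noncomputable def Trow (S : Setup r s) (m : ℤ) (u : ℂ) : ℂ :=
  if m < 0 then 0 else if m = 0 then 1 else Tfun S emptyYD (rect m.toNat 1) u

/-- `H_1^a(u) = H_{(1^a)}(u)` extended by the conventions `H_1^0 = 1`, `H_1^a = 0` for `a < 0`. -/
noncomputable def Hcol (S : Setup r s) (a : ℤ) (u : ℂ) : ℂ :=
  if a < 0 then 0 else if a = 0 then 1 else Hfun S (rect 1 a.toNat) u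


lemma mem_cells_empty (nu : YD) (i j : ℕ) :
    (i, j) ∈ cells emptyYD nu ↔ 1 ≤ i ∧ 1 ≤ j ∧ j ≤ nu.part (i - 1) := by
  rw [cells, Finset.mem_filter, Finset.mem_product, Finset.mem_Icc, Finset.mem_Icc]
  show ((1 ≤ i ∧ i ≤ nu.len) ∧ 1 ≤ j ∧ j ≤ nu.part 0) ∧ 0 < j ∧ j ≤ nu.part (i - 1) ↔ _
  constructor
  · rintro ⟨⟨⟨hi1, _⟩, ⟨hj1, _⟩⟩, _, hj⟩
    exact ⟨hi1, hj1, hj⟩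
  · rintro ⟨hi1, hj1, hj⟩
    have hlen : i ≤ nu.len := by
      by_contra h
      have := nu.zero (i - 1) (by omega)
      omega
    have hj0 : j ≤ nu.part 0 := le_trans hj (nu.anti (Nat.zero_le _))
    exact ⟨⟨⟨hi1, hlen⟩, ⟨hj1, hj0⟩⟩, by omega, hj⟩

lemma col_chain {r s : ℕ} {nu : YD} {t : Tab r s emptyYD nu}
    (ht : Adm r s emptyYD nu t) {i i' j : ℕ} (hii : i ≤ i')
    (hp : (i, j) ∈ cells emptyYD nu) :
    ∀ (hq : (i', j) ∈ cells emptyYD nu),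
      min (entry t ⟨(i, j), hp⟩ + (i' - i)) (r + 2) ≤ entry t ⟨(i', j), hq⟩ := by
  induction i', hii using Nat.le_induction with
  | base =>
    intro hq
    have he : entry t ⟨(i, j), hq⟩ = entry t ⟨(i, j), hp⟩ := rfl
    omega
  | succ n hn ih =>
    intro hq
    have hp' := (mem_cells_empty nu i j).1 hp
    have hmid : (n, j) ∈ cells emptyYD nu := by
      rw [mem_cells_empty] at hq ⊢
      exact ⟨by omega, hq.2.1, le_trans hq.2.2 (nu.anti (by omega))⟩
    have h := (ht ⟨(n, j), hmid⟩ ⟨(n + 1, j), hq⟩).2 ⟨rfl, rfl⟩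
    have hih := ih hmid
    rcases eq_or_lt_of_le h.1 with heq | hlt
    · have h2 := h.2 heq
      omega
    · omega

lemma row_chain {r s : ℕ} {nu : YD} {t : Tab r s emptyYD nu}
    (ht : Adm r s emptyYD nu t) {i j j' : ℕ} (hjj : j ≤ j')
    (hp : (i, j) ∈ cells emptyYD nu)
    (hlow : r + 2 ≤ entry t ⟨(i, j), hp⟩) :
    ∀ (hq : (i, j') ∈ cells emptyYD nu),
      entry t ⟨(i, j), hp⟩ + (j' - j) ≤ entry t ⟨(i, j'), hq⟩ := by
  induction j', hjj using Nat.le_induction with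
  | base =>
    intro hq
    have he : entry t ⟨(i, j), hq⟩ = entry t ⟨(i, j), hp⟩ := rfl
    omega
  | succ n hn ih =>
    intro hq
    have hmid : (i, n) ∈ cells emptyYD nu := by
      rw [mem_cells_empty] at hp hq ⊢
      exact ⟨hp.1, by omega, le_trans (by omega) hq.2.2⟩
    have h := (ht ⟨(i, n), hmid⟩ ⟨(i, n + 1), hq⟩).1 ⟨rfl, rfl⟩
    have hih := ih hmid
    rcases eq_or_lt_of_le h.1 with heq | hlt
    · have h2 := h.2 heq
      omega
    · omega


/-- rigidity of admissible tableaux on `μ+(c^{r+1})`: let `μ` be a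
partition with `μ₁′ ≥ r+1` and `μ_{r+1} ≥ s+1`, and let `c ≥ 1`.  Then every admissible
tableau `b` on `μ+(c^{r+1})` satisfies `b(i,j) = i` for all `1 ≤ i ≤ r+1`, `1 ≤ j ≤ c`,
and `b(i,j) ∈ J₋` for all cells with `r+2 ≤ i ≤ μ₁′`. -/
theorem tableau_rigidity (r s : ℕ) (mu : YD)
    (h1 : r + 1 ≤ mu.conj 0) (h2 : s + 1 ≤ mu.part r)
    (c : ℕ) (hc : 1 ≤ c)
    (t : Tab r s emptyYD (muPlus mu c (r + 1)))
    (ht : Adm r s emptyYD (muPlus mu c (r + 1)) t)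
    (q : Cell emptyYD (muPlus mu c (r + 1))) :
    (q.1.1 ≤ r + 1 → q.1.2 ≤ c → entry t q = q.1.1) ∧
    (r + 2 ≤ q.1.1 → r + 2 ≤ entry t q) := by
  obtain ⟨⟨i, j⟩, hq⟩ := q
  obtain ⟨hi1, hj1, hjle⟩ := (mem_cells_empty _ i j).1 hq
  have hpart : ∀ k, (muPlus mu c (r + 1)).part k
      = if k < r + 1 then mu.part k + c else mu.part k := fun k => rfl
  have hpr : (muPlus mu c (r + 1)).part r = mu.part r + c := by
    rw [hpart]; simp
  have htop : (1, j) ∈ cells emptyYD (muPlus mu c (r + 1)) :=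
    (mem_cells_empty _ 1 j).2
      ⟨le_refl 1, hj1, le_trans hjle ((muPlus mu c (r + 1)).anti (Nat.zero_le _))⟩
  have hchain := col_chain ht hi1 htop hq
  have hge1 : 1 ≤ entry t ⟨(1, j), htop⟩ := Nat.le_add_left 1 _
  constructor
  · intro hir hjc
    replace hir : i ≤ r + 1 := hir
    replace hjc : j ≤ c := hjc
    show entry t ⟨(i, j), hq⟩ = i
    by_cases hle : entry t ⟨(i, j), hq⟩ ≤ i
    · omega
    · exfalso
      have hr1 : (r + 1, j) ∈ cells emptyYD (muPlus mu c (r + 1)) := by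
        rw [mem_cells_empty]
        exact ⟨by omega, hj1, by show j ≤ (muPlus mu c (r + 1)).part r; omega⟩
      have h2 := col_chain ht (show i ≤ r + 1 from hir) hq hr1
      have hr2 : r + 2 ≤ entry t ⟨(r + 1, j), hr1⟩ := by omega
      have hend : (r + 1, j + (s + 1)) ∈ cells emptyYD (muPlus mu c (r + 1)) := by
        rw [mem_cells_empty]
        exact ⟨by omega, by omega, by
          show j + (s + 1) ≤ (muPlus mu c (r + 1)).part r; omega⟩
      have h3 := row_chain ht (Nat.le_add_right j (s + 1)) hr1 hr2 hend
      have hub : entry t ⟨(r + 1, j + (s + 1)), hend⟩ ≤ r + s + 2 := by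
        have := (t ⟨(r + 1, j + (s + 1)), hend⟩).isLt
        have he : entry t ⟨(r + 1, j + (s + 1)), hend⟩
            = (t ⟨(r + 1, j + (s + 1)), hend⟩).1 + 1 := rfl
        omega
      omega
  · intro hir
    replace hir : r + 2 ≤ i := hir
    show r + 2 ≤ entry t ⟨(i, j), hq⟩
    omega

end AnalyticBethe
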